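/- Let D be a bounded Lebesgue-measurable subset of ℝ with λ₁(D) > 0. Then liminf_{h → 0⁺} λ₁(D \ (D + h)) / h ≥ 1, where λ₁ denotes Lebesgue measure on ℝ. -/

import Mathlib

open MeasureTheory Topology Filter Set
open scoped ENNReal

lemma key_translate_lemma {D : Set ℝ} (hmeas : MeasurableSet D)
    (hbd : Bornology.IsBounded D) {h : ℝ} (hh : 0 < h) (t : ℝ) :
    volume (D ∩ Ico t (t + h)) ≤ volume (D \ ((· + h) '' D)) := by
  obtain ⟨R, hR⟩ := hbd.subset_closedBall 0
  obtain ⟨n, hn⟩ := exists_nat_ge ((t + h + R) / h)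
  have hnh : t + h + R ≤ n * h := by
    rw [div_le_iff₀ hh] at hn
    linarith
  set s₀ : ℝ := t - n * h with hs₀
  set E : Set ℝ := (· + h) '' D with hE
  have hEmeas : MeasurableSet E := by
    rw [hE, Set.image_add_right]
    exact hmeas.preimage (measurable_add_const _)
  have hEvol : ∀ S : Set ℝ, volume ((· + h) '' S) = volume S := by
    intro S
    rw [Set.image_add_right]
    exact measure_preimage_add_right volume _ S
  have main : ∀ j : ℕ, volume (D ∩ Ico (s₀ + j * h) (s₀ + j * h + h)) ≤
      volume ((D \ E) ∩ Iio (s₀ + j * h + h)) := by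
    intro j
    induction j with
    | zero =>
      have : D ∩ Ico (s₀ + (0 : ℕ) * h) (s₀ + (0 : ℕ) * h + h) = ∅ := by
        ext x
        simp only [mem_inter_iff, mem_Ico, mem_empty_iff_false, iff_false, not_and]
        intro hxD h1 h2
        have hx : x ∈ Metric.closedBall (0 : ℝ) R := hR hxD
        rw [Metric.mem_closedBall, Real.dist_eq, sub_zero] at hx
        have : -R ≤ x := by cases abs_le.mp hx; linarith
        push_cast at h2 ⊢
        linarith
      rw [this]
      simp
    | succ j ih =>
      set s : ℝ := s₀ + (j + 1 : ℕ) * h with hs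
      have hsh : s - h = s₀ + j * h := by push_cast [hs]; ring
      have hsub : D ∩ Ico s (s + h) ⊆
          ((D \ E) ∩ Ico s (s + h)) ∪ ((· + h) '' (D ∩ Ico (s - h) s)) := by
        rintro x ⟨hxD, hx1, hx2⟩
        by_cases hxE : x ∈ E
        · right
          obtain ⟨y, hyD, hyx⟩ := hxE
          have hyx' : y + h = x := hyx
          exact ⟨y, ⟨hyD, mem_Ico.mpr ⟨by linarith, by linarith⟩⟩, hyx⟩
        · exact Or.inl ⟨⟨hxD, hxE⟩, hx1, hx2⟩
      have hdisj0 : Disjoint (Iio s) (Ico s (s + h)) := by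
        rw [Set.disjoint_left]
        intro x hx hx2
        exact absurd hx2.1 (not_le.mpr hx)
      have hdisj : Disjoint ((D \ E) ∩ Iio s) ((D \ E) ∩ Ico s (s + h)) :=
        hdisj0.mono inter_subset_right inter_subset_right
      calc volume (D ∩ Ico s (s + h))
          ≤ volume (((D \ E) ∩ Ico s (s + h)) ∪ ((· + h) '' (D ∩ Ico (s - h) s))) :=
            measure_mono hsub
        _ ≤ volume ((D \ E) ∩ Ico s (s + h)) + volume ((· + h) '' (D ∩ Ico (s - h) s)) :=
            measure_union_le _ _
        _ = volume ((D \ E) ∩ Ico s (s + h)) + volume (D ∩ Ico (s - h) s) := by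
            rw [hEvol]
        _ ≤ volume ((D \ E) ∩ Ico s (s + h)) + volume ((D \ E) ∩ Iio s) := by
            refine add_le_add_right ?_ _
            rw [← hsh, sub_add_cancel] at ih
            exact ih
        _ = volume (((D \ E) ∩ Iio s) ∪ ((D \ E) ∩ Ico s (s + h))) := by
            rw [measure_union hdisj (((hmeas.diff hEmeas)).inter measurableSet_Ico)]
            ring
        _ ≤ volume ((D \ E) ∩ Iio (s + h)) := by
            apply measure_mono
            rintro x (⟨hx1, hx2⟩ | ⟨hx1, hx2, hx3⟩)
            · refine ⟨hx1, ?_⟩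
              simp only [mem_Iio] at hx2 ⊢
              linarith
            · exact ⟨hx1, hx3⟩
  have := main n
  have ht : s₀ + n * h = t := by rw [hs₀]; ring
  rw [ht] at this
  exact this.trans (measure_mono inter_subset_left)

/-- If `D ⊆ ℝ` is bounded, measurable and of positive measure, then
`liminf_{h → 0⁺} λ₁(D \ (D + h)) / h ≥ 1`. -/
theorem liminf_measure_sdiff_translate_ge_one (D : Set ℝ)
    (hmeas : MeasurableSet D) (hbd : Bornology.IsBounded D) (hpos : 0 < volume D) :
    1 ≤ liminf (fun h : ℝ => volume (D \ ((· + h) '' D)) / ENNReal.ofReal h) (𝓝[>] 0) := by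
  have hres : (volume.restrict D) ≠ 0 := by
    simp only [ne_eq, Measure.restrict_eq_zero]
    exact hpos.ne'
  have : NeBot (ae (volume.restrict D)) := ae_neBot.mpr hres
  obtain ⟨x₀, hx₀⟩ := (Besicovitch.ae_tendsto_measure_inter_div volume D).exists
  -- hx₀ : Tendsto (fun r => volume (D ∩ Metric.closedBall x₀ r) / volume (Metric.closedBall x₀ r))
  --   (𝓝[>] 0) (𝓝 1)
  set g : ℝ → ℝ≥0∞ := fun h => volume (D ∩ Metric.closedBall x₀ (h / 2)) / ENNReal.ofReal h
    with hg_def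
  have hhalf : Tendsto (fun h : ℝ => h / 2) (𝓝[>] 0) (𝓝[>] 0) := by
    apply tendsto_nhdsWithin_of_tendsto_nhds_of_eventually_within
    · have : Tendsto (fun h : ℝ => h / 2) (𝓝 0) (𝓝 (0 / 2)) := tendsto_id.div_const 2
      simpa using this.mono_left nhdsWithin_le_nhds
    · filter_upwards [self_mem_nhdsWithin] with h hh
      exact half_pos (Set.mem_Ioi.mp hh)
  have hg : Tendsto g (𝓝[>] 0) (𝓝 1) := by
    have comp := hx₀.comp hhalf
    have : g = (fun r => volume (D ∩ Metric.closedBall x₀ r) / volume (Metric.closedBall x₀ r)) ∘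
        (fun h : ℝ => h / 2) := by
      funext h
      simp only [Function.comp_apply, hg_def, Real.volume_closedBall]
      rw [show (2:ℝ) * (h / 2) = h from by ring]
    rwa [this]
  have hle : ∀ᶠ h in 𝓝[>] (0 : ℝ),
      g h ≤ volume (D \ ((· + h) '' D)) / ENNReal.ofReal h := by
    filter_upwards [self_mem_nhdsWithin] with h hh
    have hh' : (0 : ℝ) < h := hh
    apply ENNReal.div_le_div_right
    have hball : Metric.closedBall x₀ (h / 2) = Icc (x₀ - h / 2) (x₀ + h / 2) :=
      Real.closedBall_eq_Icc
    have h1 : volume (D ∩ Metric.closedBall x₀ (h / 2)) ≤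
        volume (D ∩ Ico (x₀ - h / 2) (x₀ - h / 2 + h)) := by
      have hsub : D ∩ Metric.closedBall x₀ (h / 2) ⊆
          (D ∩ Ico (x₀ - h / 2) (x₀ - h / 2 + h)) ∪ {x₀ + h / 2} := by
        rintro x ⟨hxD, hx⟩
        rw [hball, mem_Icc] at hx
        rcases eq_or_lt_of_le hx.2 with heq | hlt
        · exact Or.inr (by simp [heq])
        · exact Or.inl ⟨hxD, hx.1, by linarith⟩
      calc volume (D ∩ Metric.closedBall x₀ (h / 2))
          ≤ volume ((D ∩ Ico (x₀ - h / 2) (x₀ - h / 2 + h)) ∪ {x₀ + h / 2}) :=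
            measure_mono hsub
        _ ≤ volume (D ∩ Ico (x₀ - h / 2) (x₀ - h / 2 + h)) + volume ({x₀ + h / 2} : Set ℝ) :=
            measure_union_le _ _
        _ = volume (D ∩ Ico (x₀ - h / 2) (x₀ - h / 2 + h)) := by
            rw [Real.volume_singleton, add_zero]
    exact h1.trans (key_translate_lemma hmeas hbd hh' _)
  calc (1 : ℝ≥0∞) = liminf g (𝓝[>] (0 : ℝ)) := (hg.liminf_eq).symm
    _ ≤ liminf (fun h : ℝ => volume (D \ ((· + h) '' D)) / ENNReal.ofReal h) (𝓝[>] 0) :=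
      liminf_le_liminf hle
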